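/- Let b(g,k) be real numbers indexed by integers g ≥ 1 and k, with b(g,k) = 0 unless 0 ≤ k ≤ g−1. For each g ≥ 1 define F_g on the positive reals by F_g(λ) = Σ_{k=0}^{g−1} b(g,k)·s(λ)^{−(4g+1+2k)}, and let D be the operator (Df)(λ) = f′(λ)/s(λ). If for every g ≥ 1 and every λ > 0 one has (D(D(D F_g)))(λ) = s(λ)²·(D F_{g+1})(λ) − c(λ)·F_{g+1}(λ), then for every g ≥ 1 and every integer k with 0 ≤ k ≤ g the three-term recurrence holds: (4g+2k+6)·b(g+1,k) = (4g+2k+1)·(4g+2k+3)·[(4g+2k+2)·b(g,k) + 4·(4g+2k−1)·b(g,k−1)]. -/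

import Mathlib

/-- `sh λ = e^λ - e^{-λ}`. -/
noncomputable def sh (l : ℝ) : ℝ := Real.exp l - Real.exp (-l)

/-- `ch λ = e^λ + e^{-λ}`. -/
noncomputable def ch (l : ℝ) : ℝ := Real.exp l + Real.exp (-l)

/-- The operator `(Df)(λ) = f'(λ)/s(λ)`. -/
noncomputable def Dop (f : ℝ → ℝ) : ℝ → ℝ := fun l => deriv f l / sh l

lemma hasDerivAt_sh (l : ℝ) : HasDerivAt sh (ch l) l := by
  have h := (Real.hasDerivAt_exp l).sub ((Real.hasDerivAt_exp (-l)).comp l ((hasDerivAt_id l).neg))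
  have e : sh = Real.exp - Real.exp ∘ Neg.neg := by funext x; simp [sh]
  rw [e]; simpa [ch, sub_neg_eq_add] using h

lemma hasDerivAt_ch (l : ℝ) : HasDerivAt ch (sh l) l := by
  have h := (Real.hasDerivAt_exp l).add ((Real.hasDerivAt_exp (-l)).comp l ((hasDerivAt_id l).neg))
  have e : ch = Real.exp + Real.exp ∘ Neg.neg := by funext x; simp [ch]
  rw [e]; simpa [sh, sub_eq_add_neg] using h

lemma sh_pos {l : ℝ} (h : 0 < l) : 0 < sh l := by
  have : Real.exp (-l) < Real.exp l := Real.exp_lt_exp.2 (by linarith)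
  simp [sh]; linarith

lemma ch_pos (l : ℝ) : 0 < ch l := by
  have := Real.exp_pos l; have := Real.exp_pos (-l); simp [ch]; linarith

lemma ch_sq (l : ℝ) : ch l ^ 2 = sh l ^ 2 + 4 := by
  have h : Real.exp l * Real.exp (-l) = 1 := by
    rw [← Real.exp_add]; simp
  simp only [ch, sh]; nlinarith [h]

lemma sh_strictMono : StrictMono sh := by
  intro a b hab
  have h1 : Real.exp a < Real.exp b := Real.exp_lt_exp.2 hab
  have h2 : Real.exp (-b) < Real.exp (-a) := Real.exp_lt_exp.2 (by linarith)
  simp only [sh]; linarith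

noncomputable def Pf (N : ℕ) (a a2 : ℕ → ℝ) (m m2 : ℕ → ℤ) : ℝ → ℝ :=
  fun l => ∑ k ∈ Finset.range N, (a k * sh l ^ m k + a2 k * sh l ^ m2 k)

noncomputable def Qf (N : ℕ) (a a2 : ℕ → ℝ) (m m2 : ℕ → ℤ) : ℝ → ℝ :=
  fun l => ch l * Pf N a a2 m m2 l

lemma hasDerivAt_Pf {N a a2 m m2} {l : ℝ} (hl : sh l ≠ 0) :
    HasDerivAt (Pf N a a2 m m2)
      (ch l * ∑ k ∈ Finset.range N,
        (a k * (m k : ℝ) * sh l ^ (m k - 1) + a2 k * (m2 k : ℝ) * sh l ^ (m2 k - 1))) l := by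
  have h : HasDerivAt (Pf N a a2 m m2)
      (∑ k ∈ Finset.range N, (a k * ((m k : ℝ) * sh l ^ (m k - 1) * ch l)
        + a2 k * ((m2 k : ℝ) * sh l ^ (m2 k - 1) * ch l))) l := by
    apply HasDerivAt.fun_sum
    intro k _
    exact (((hasDerivAt_zpow (m k) (sh l) (Or.inl hl)).comp l (hasDerivAt_sh l)).const_mul (a k)).add
      (((hasDerivAt_zpow (m2 k) (sh l) (Or.inl hl)).comp l (hasDerivAt_sh l)).const_mul (a2 k))
  convert h using 1
  rw [Finset.mul_sum]
  exact Finset.sum_congr rfl fun k _ => by ring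

lemma zpow_succ_sh {l : ℝ} (hl : sh l ≠ 0) (m : ℤ) : sh l ^ (m - 1) * sh l = sh l ^ m := by
  rw [← zpow_add_one₀ hl]; norm_num

lemma zpow_div_sh {l : ℝ} (hl : sh l ≠ 0) (m : ℤ) : sh l ^ (m - 1) / sh l = sh l ^ (m - 2) := by
  rw [div_eq_iff hl, ← zpow_add_one₀ hl]; congr 1; ring

lemma LP {N a a2 m m2} {l : ℝ} (hl : 0 < l) :
    Dop (Pf N a a2 m m2) l =
      Qf N (fun k => a k * m k) (fun k => a2 k * m2 k)
        (fun k => m k - 2) (fun k => m2 k - 2) l := by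
  have hs : sh l ≠ 0 := (sh_pos hl).ne'
  unfold Dop
  rw [(hasDerivAt_Pf hs).deriv]
  unfold Qf Pf
  rw [mul_div_assoc]
  congr 1
  rw [Finset.sum_div]
  refine Finset.sum_congr rfl fun k _ => ?_
  rw [add_div, mul_div_assoc, mul_div_assoc, zpow_div_sh hs, zpow_div_sh hs]

lemma zpow_two_sh {l : ℝ} (hl : sh l ≠ 0) (m : ℤ) : sh l ^ (m - 2) * sh l ^ (2:ℕ) = sh l ^ m := by
  rw [← zpow_natCast (sh l) 2, ← zpow_add₀ hl]; congr 1; ring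

lemma LQ {N a m m2} {l : ℝ} (hl : 0 < l) :
    Dop (Qf N a (fun _ => 0) m m2) l =
      Pf N (fun k => a k * ((m k : ℝ) + 1)) (fun k => 4 * a k * m k)
        m (fun k => m k - 2) l := by
  have hs : sh l ≠ 0 := (sh_pos hl).ne'
  have hd : HasDerivAt (Qf N a (fun _ => 0) m m2)
      (sh l * Pf N a (fun _ => 0) m m2 l +
        ch l * (ch l * ∑ k ∈ Finset.range N,
          (a k * (m k : ℝ) * sh l ^ (m k - 1) + 0 * (m2 k : ℝ) * sh l ^ (m2 k - 1)))) l :=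
    (hasDerivAt_ch l).mul (hasDerivAt_Pf hs)
  unfold Dop
  rw [hd.deriv, div_eq_iff hs]
  have hch : ch l ^ 2 = sh l ^ 2 + 4 := ch_sq l
  unfold Pf
  simp only [zero_mul, add_zero, mul_zero, zero_add]
  rw [Finset.mul_sum, Finset.mul_sum, Finset.sum_mul, Finset.mul_sum, ← Finset.sum_add_distrib]
  refine Finset.sum_congr rfl fun k _ => ?_
  have e1 : sh l ^ (m k - 1) * sh l = sh l ^ m k := zpow_succ_sh hs (m k)
  have e2 : sh l ^ (m k - 2) * sh l = sh l ^ (m k - 1) := by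
    rw [← zpow_add_one₀ hs]; congr 1; ring
  have e3 : sh l ^ (m k - 2) * sh l ^ (2:ℕ) = sh l ^ m k := zpow_two_sh hs (m k)
  linear_combination (a k * (m k:ℝ) * sh l ^ (m k - 1)) * hch + (a k * (m k:ℝ) * sh l) * e1 + (-(4:ℝ) * a k * (m k:ℝ)) * e2

lemma Dop_congr {f g : ℝ → ℝ} {l : ℝ} (hl : 0 < l) (hfg : ∀ x, 0 < x → f x = g x) :
    Dop f l = Dop g l := by
  unfold Dop
  congr 1
  apply Filter.EventuallyEq.deriv_eq
  filter_upwards [Ioi_mem_nhds hl] with x hx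
  exact hfg x hx

lemma coeffs_zero (N B : ℕ) (c : ℕ → ℝ)
    (h : ∀ l : ℝ, 0 < l → ∑ j ∈ Finset.range N, c j * sh l ^ (-((B:ℤ) + 2*(j:ℤ))) = 0) :
    ∀ i ∈ Finset.range N, c i = 0 := by
  set p : Polynomial ℝ :=
    ∑ j ∈ Finset.range N, Polynomial.C (c j) * Polynomial.X ^ (2*(N-1-j)) with hp
  have hroot : ∀ l : ℝ, 0 < l → p.IsRoot (sh l) := by
    intro l hl
    have hs : sh l ≠ 0 := (sh_pos hl).ne'
    have key : p.eval (sh l) =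
        sh l ^ ((B:ℤ) + 2*((N:ℤ)-1)) * ∑ j ∈ Finset.range N, c j * sh l ^ (-((B:ℤ) + 2*(j:ℤ))) := by
      rw [hp, Polynomial.eval_finset_sum, Finset.mul_sum]
      refine Finset.sum_congr rfl fun j hj => ?_
      have hjN : j + 1 ≤ N := Finset.mem_range.1 hj
      simp only [Polynomial.eval_mul, Polynomial.eval_C, Polynomial.eval_pow, Polynomial.eval_X]
      rw [mul_comm (sh l ^ ((B:ℤ) + 2*((N:ℤ)-1))), mul_assoc]
      congr 1
      rw [← zpow_natCast (sh l) (2*(N-1-j)), ← zpow_add₀ hs]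
      congr 1
      push_cast [Nat.cast_sub (by omega : j ≤ N - 1), Nat.cast_sub (by omega : 1 ≤ N)]
      ring
    simp only [Polynomial.IsRoot, key, h l hl, mul_zero]
  have hinf : {x : ℝ | p.IsRoot x}.Infinite := by
    have hsub : sh '' Set.Ioi 0 ⊆ {x : ℝ | p.IsRoot x} := by
      rintro x ⟨l, hl, rfl⟩
      exact hroot l hl
    exact ((Set.Ioi_infinite 0).image sh_strictMono.injective.injOn).mono hsub
  have hp0 : p = 0 := Polynomial.eq_zero_of_infinite_isRoot p hinf
  intro i hi
  have hiN : i + 1 ≤ N := Finset.mem_range.1 hi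
  have := congrArg (fun q => Polynomial.coeff q (2*(N-1-i))) hp0
  simp only [hp, Polynomial.finset_sum_coeff, Polynomial.coeff_C_mul,
    Polynomial.coeff_X_pow, Polynomial.coeff_zero] at this
  rw [Finset.sum_eq_single i] at this
  · simpa using this
  · intro j hj hji
    have hjN : j + 1 ≤ N := Finset.mem_range.1 hj
    have hne : ¬ (2*(N-1-i) = 2*(N-1-j)) := by omega
    simp [hne]
  · intro h'; exact absurd hi h'

lemma chain {N : ℕ} (a : ℕ → ℝ) (m : ℕ → ℤ) {x : ℝ} (hx : 0 < x)
    (f : ℝ → ℝ) (hf : f = Pf N a (fun _ => 0) m m) :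
    Dop (Dop (Dop f)) x = ch x * ∑ k ∈ Finset.range N,
      ( a k * (m k : ℝ) * ((m k : ℝ) - 1) * ((m k : ℝ) - 2) * sh x ^ (m k - 4)
      + 4 * a k * (m k : ℝ) * ((m k : ℝ) - 2) * ((m k : ℝ) - 4) * sh x ^ (m k - 6) ) := by
  have h1 : ∀ y : ℝ, 0 < y → Dop f y =
      Qf N (fun k => a k * (m k : ℝ)) (fun _ => (0:ℝ))
        (fun k => m k - 2) (fun k => m k - 2) y := by
    intro y hy
    rw [hf, LP hy]
    unfold Qf Pf
    simp
  have h2 : ∀ y : ℝ, 0 < y → Dop (Dop f) y =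
      Pf N (fun k => (a k * (m k : ℝ)) * (((m k - 2 : ℤ) : ℝ) + 1))
        (fun k => 4 * (a k * (m k : ℝ)) * ((m k - 2 : ℤ) : ℝ))
        (fun k => m k - 2) (fun k => m k - 2 - 2) y := by
    intro y hy
    rw [Dop_congr hy h1, LQ hy]
  rw [Dop_congr hx h2, LP hx]
  unfold Qf Pf
  congr 1
  refine Finset.sum_congr rfl fun k _ => ?_
  have e1 : m k - 2 - 2 = m k - 4 := by ring
  have e2 : m k - 2 - 2 - 2 = m k - 6 := by ring
  simp only [e1, e2]
  push_cast
  ring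

theorem stmt0
    (b : ℕ → ℤ → ℝ)
    (hb_supp : ∀ g : ℕ, 1 ≤ g → ∀ k : ℤ, ¬ (0 ≤ k ∧ k ≤ (g : ℤ) - 1) → b g k = 0)
    (F : ℕ → ℝ → ℝ)
    (hF : ∀ g : ℕ, 1 ≤ g → ∀ l : ℝ,
      F g l = ∑ k ∈ Finset.range g, b g k * (sh l) ^ (-(4 * (g : ℤ) + 1 + 2 * (k : ℤ))))
    (hode : ∀ g : ℕ, 1 ≤ g → ∀ l : ℝ, 0 < l →
      Dop (Dop (Dop (F g))) l = (sh l) ^ 2 * Dop (F (g + 1)) l - ch l * F (g + 1) l) :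
    ∀ g : ℕ, 1 ≤ g → ∀ k : ℤ, 0 ≤ k → k ≤ (g : ℤ) →
      (4 * (g : ℝ) + 2 * (k : ℝ) + 6) * b (g + 1) k =
        (4 * (g : ℝ) + 2 * (k : ℝ) + 1) * (4 * (g : ℝ) + 2 * (k : ℝ) + 3) *
          ((4 * (g : ℝ) + 2 * (k : ℝ) + 2) * b g k
            + 4 * (4 * (g : ℝ) + 2 * (k : ℝ) - 1) * b g (k - 1)) := by
  intro g hg k hk0 hkg
  have hbgg : b g ((g:ℕ) : ℤ) = 0 := hb_supp g hg g (by omega)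
  have hbm1 : b g (-1) = 0 := hb_supp g hg (-1) (by omega)
  have hFg : F g = Pf g (fun j => b g (j:ℤ)) (fun _ => 0)
      (fun j => -(4*(g:ℤ)+1+2*(j:ℤ))) (fun j => -(4*(g:ℤ)+1+2*(j:ℤ))) := by
    funext l
    rw [hF g hg l]
    unfold Pf
    simp
  have hFg1 : F (g+1) = Pf (g+1) (fun j => b (g+1) (j:ℤ)) (fun _ => 0)
      (fun j => -(4*(g:ℤ)+5+2*(j:ℤ))) (fun j => -(4*(g:ℤ)+5+2*(j:ℤ))) := by
    funext l
    rw [hF (g+1) (by omega) l]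
    unfold Pf
    have he : ∀ j : ℕ, -(4*(((g:ℕ)+1 : ℕ):ℤ)+1+2*(j:ℤ)) = -(4*(g:ℤ)+5+2*(j:ℤ)) := by
      intro j; push_cast; ring
    refine Finset.sum_congr rfl fun j _ => ?_
    rw [he j]
    simp
  set c : ℕ → ℝ := fun j =>
    (4*(g:ℝ)+2*(j:ℝ)+6) * b (g+1) (j:ℤ)
    - (4*(g:ℝ)+2*(j:ℝ)+1)*(4*(g:ℝ)+2*(j:ℝ)+3) *
        ((4*(g:ℝ)+2*(j:ℝ)+2) * b g (j:ℤ) + 4*(4*(g:ℝ)+2*(j:ℝ)-1) * b g ((j:ℤ)-1)) with hc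
  have hsum : ∀ x : ℝ, 0 < x →
      ∑ j ∈ Finset.range (g+1), c j * sh x ^ (-(((4*g+5 : ℕ) : ℤ) + 2*(j:ℤ))) = 0 := by
    intro x hx
    have hs : sh x ≠ 0 := (sh_pos hx).ne'
    have hchx : ch x ≠ 0 := (ch_pos x).ne'
    have hode' := hode g hg x hx
    rw [chain (fun j => b g (j:ℤ)) (fun j => -(4*(g:ℤ)+1+2*(j:ℤ))) hx (F g) hFg] at hode'
    rw [hFg1, LP hx] at hode'
    unfold Qf Pf at hode'
    simp only [zero_mul, add_zero, mul_zero, zero_add] at hode'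
    set T1 : ℕ → ℝ := fun j => b g (j:ℤ) * ((-(4 * (g:ℤ) + 1 + 2 * (j:ℤ)) : ℤ) : ℝ) *
        (((-(4 * (g:ℤ) + 1 + 2 * (j:ℤ)) : ℤ) : ℝ) - 1) * (((-(4 * (g:ℤ) + 1 + 2 * (j:ℤ)) : ℤ) : ℝ) - 2) *
        sh x ^ (-(4 * (g:ℤ) + 1 + 2 * (j:ℤ)) - 4) with hT1def
    set T2 : ℕ → ℝ := fun j => 4 * b g (j:ℤ) * ((-(4 * (g:ℤ) + 1 + 2 * (j:ℤ)) : ℤ) : ℝ) *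
        (((-(4 * (g:ℤ) + 1 + 2 * (j:ℤ)) : ℤ) : ℝ) - 2) * (((-(4 * (g:ℤ) + 1 + 2 * (j:ℤ)) : ℤ) : ℝ) - 4) *
        sh x ^ (-(4 * (g:ℤ) + 1 + 2 * (j:ℤ)) - 6) with hT2def
    set A2 : ℕ → ℝ := fun j => b (g + 1) (j:ℤ) * ((-(4 * (g:ℤ) + 5 + 2 * (j:ℤ)) : ℤ) : ℝ) *
        sh x ^ (-(4 * (g:ℤ) + 5 + 2 * (j:ℤ)) - 2) with hA2def
    set A3 : ℕ → ℝ := fun j => b (g + 1) (j:ℤ) * sh x ^ (-(4 * (g:ℤ) + 5 + 2 * (j:ℤ))) with hA3def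
    set U : ℕ → ℝ := fun j => 4 * b g ((j:ℤ) - 1) * (-(4*(g:ℝ)+2*(j:ℝ)-1)) *
        (-(4*(g:ℝ)+2*(j:ℝ)-1) - 2) * (-(4*(g:ℝ)+2*(j:ℝ)-1) - 4) *
        sh x ^ (-(((4*g+5 : ℕ) : ℤ) + 2*(j:ℤ))) with hUdef
    have key : (∑ k ∈ Finset.range g, (T1 k + T2 k)) =
        sh x ^ 2 * (∑ i ∈ Finset.range (g + 1), A2 i) - ∑ i ∈ Finset.range (g + 1), A3 i := by
      apply mul_left_cancel₀ hchx
      simp only [hT1def, hT2def, hA2def, hA3def]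
      linear_combination hode'
    have hT1ext : (∑ j ∈ Finset.range (g+1), T1 j) = ∑ k ∈ Finset.range g, T1 k := by
      rw [Finset.sum_range_succ]
      simp [hT1def, hbgg]
    have hUshift : (∑ j ∈ Finset.range (g+1), U j) = ∑ k ∈ Finset.range g, T2 k := by
      rw [Finset.sum_range_succ']
      have hU0 : U 0 = 0 := by simp [hUdef, hbm1]
      rw [hU0, add_zero]
      refine Finset.sum_congr rfl fun j _ => ?_
      simp only [hUdef, hT2def]
      rw [show (((j+1:ℕ)):ℤ) - 1 = (j:ℤ) from by push_cast; ring,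
        show (-(((4*g+5 : ℕ) : ℤ) + 2*((j+1:ℕ):ℤ))) = -(4 * (g:ℤ) + 1 + 2 * (j:ℤ)) - 6 from by
          push_cast; ring]
      push_cast
      ring
    have perterm : ∀ j ∈ Finset.range (g+1),
        c j * sh x ^ (-(((4*g+5 : ℕ) : ℤ) + 2*(j:ℤ))) =
          (T1 j + U j) - (sh x ^ 2 * A2 j - A3 j) := by
      intro j _
      simp only [hT1def, hA2def, hA3def, hUdef, hc]
      rw [show (-(4 * (g:ℤ) + 5 + 2 * (j:ℤ))) = -(((4*g+5 : ℕ) : ℤ) + 2*(j:ℤ)) from by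
          push_cast; ring,
        show (-(4 * (g:ℤ) + 1 + 2 * (j:ℤ)) - 4) = -(((4*g+5 : ℕ) : ℤ) + 2*(j:ℤ)) from by
          push_cast; ring]
      have hz : sh x ^ ((-(((4*g+5 : ℕ) : ℤ) + 2*(j:ℤ))) - 2) * sh x ^ (2:ℕ) =
          sh x ^ (-(((4*g+5 : ℕ) : ℤ) + 2*(j:ℤ))) := zpow_two_sh hs _
      push_cast at hz ⊢
      linear_combination (b (g + 1) (j:ℤ) * (-(4*(g:ℝ) + 5 + 2*(j:ℝ)))) * hz
    calc ∑ j ∈ Finset.range (g + 1), c j * sh x ^ (-(((4*g+5 : ℕ) : ℤ) + 2*(j:ℤ)))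
        = ∑ j ∈ Finset.range (g + 1), ((T1 j + U j) - (sh x ^ 2 * A2 j - A3 j)) :=
          Finset.sum_congr rfl perterm
      _ = ((∑ j ∈ Finset.range (g+1), T1 j) + (∑ j ∈ Finset.range (g+1), U j))
            - (sh x ^ 2 * (∑ i ∈ Finset.range (g + 1), A2 i)
                - ∑ i ∈ Finset.range (g + 1), A3 i) := by
          rw [Finset.sum_sub_distrib, Finset.sum_add_distrib, Finset.sum_sub_distrib,
            Finset.mul_sum]
      _ = 0 := by
          rw [hT1ext, hUshift, ← key, Finset.sum_add_distrib]
          ring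
  have hcz := coeffs_zero (g+1) (4*g+5) c hsum
  lift k to ℕ using hk0 with j
  have hjg : j ≤ g := by exact_mod_cast hkg
  have h0 := hcz j (Finset.mem_range.2 (by omega))
  simp only [hc] at h0
  push_cast at h0 ⊢
  linear_combination h0
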